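/- If S₁ is a UPB on H_{A₁} ⊗ H_{B₁} with members ψ_i¹ (i = 1,...,l₁) and S₂ is a UPB on H_{A₂} ⊗ H_{B₂} with members ψ_j² (j = 1,...,l₂), then the set {ψ_i¹ ⊗ ψ_j²} of l₁l₂ product states, viewed in (H_{A₁} ⊗ H_{A₂}) ⊗ (H_{B₁} ⊗ H_{B₂}) with Alice holding the A₁A₂ factors and Bob the B₁B₂ factors, is a UPB. -/

import Mathlib

/-- The product vector x ⊗ y in ℂ^{d1} ⊗ ℂ^{d2} ≅ ℂ^{d1·d2}. -/
noncomputable def prodVec {d1 d2 : ℕ} (x : EuclideanSpace ℂ (Fin d1))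
    (y : EuclideanSpace ℂ (Fin d2)) : EuclideanSpace ℂ (Fin d1 × Fin d2) :=
  WithLp.toLp 2 (fun p => x p.1 * y p.2)



noncomputable def contr {d1 d2 : ℕ} (a : EuclideanSpace ℂ (Fin d1 × Fin d2))
    (u : EuclideanSpace ℂ (Fin d1)) : EuclideanSpace ℂ (Fin d2) :=
  WithLp.toLp 2 (fun y => ∑ x, a (x, y) * (starRingEnd ℂ) (u x))

noncomputable def aSlice {d1 d2 : ℕ} (a : EuclideanSpace ℂ (Fin d1 × Fin d2))
    (y : Fin d2) : EuclideanSpace ℂ (Fin d1) :=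
  WithLp.toLp 2 (fun x => a (x, y))

lemma inner_prodVec {d1 d2 : ℕ} (u u' : EuclideanSpace ℂ (Fin d1))
    (v v' : EuclideanSpace ℂ (Fin d2)) :
    (inner ℂ (prodVec u v) (prodVec u' v') : ℂ) = inner ℂ u u' * inner ℂ v v' := by
  simp only [PiLp.inner_apply, RCLike.inner_apply, prodVec, PiLp.toLp_apply, Fintype.sum_prod_type, map_mul]
  rw [Finset.sum_mul_sum]
  exact Finset.sum_congr rfl fun x _ => Finset.sum_congr rfl fun y _ => by ring

lemma inner_contr {d1 d2 : ℕ} (a : EuclideanSpace ℂ (Fin d1 × Fin d2))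
    (u : EuclideanSpace ℂ (Fin d1)) (v : EuclideanSpace ℂ (Fin d2)) :
    (inner ℂ a (prodVec u v) : ℂ) = inner ℂ (contr a u) v := by
  simp only [PiLp.inner_apply, RCLike.inner_apply', prodVec, contr, PiLp.toLp_apply, Fintype.sum_prod_type,
    map_sum, map_mul, Complex.conj_conj, Finset.sum_mul]
  rw [Finset.sum_comm]
  exact Finset.sum_congr rfl fun x _ => Finset.sum_congr rfl fun y _ => by ring

lemma inner_slice {d1 d2 : ℕ} (a : EuclideanSpace ℂ (Fin d1 × Fin d2))
    (u : EuclideanSpace ℂ (Fin d1)) (y : Fin d2) :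
    (inner ℂ (aSlice a y) u : ℂ) = (starRingEnd ℂ) (contr a u y) := by
  simp only [PiLp.inner_apply, RCLike.inner_apply', aSlice, contr, PiLp.toLp_apply, map_sum, map_mul,
    Complex.conj_conj]

lemma exists_ne_zero_coord {ι : Type*} [Fintype ι] (a : EuclideanSpace ℂ ι) (ha : a ≠ 0) :
    ∃ p, a p ≠ 0 := by
  by_contra h
  push_neg at h
  exact ha (PiLp.ext fun p => by simpa using h p)

/-- Tensor products of bipartite UPBs are UPBs.  S₁ = {α1_i ⊗ β1_i} is a UPB on
ℂ^{a1} ⊗ ℂ^{b1}, S₂ = {α2_j ⊗ β2_j} on ℂ^{a2} ⊗ ℂ^{b2} (mutually orthogonal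
nonzero product vectors, with no nonzero product vector orthogonal to all
members).  Then the l₁l₂ states (α1_i ⊗ α2_j) ⊗ (β1_i ⊗ β2_j), with Alice
holding ℂ^{a1} ⊗ ℂ^{a2} and Bob ℂ^{b1} ⊗ ℂ^{b2}, form a UPB: they are mutually
orthogonal and no nonzero product vector (for the A|B cut) is orthogonal to all
of them. -/
theorem stmt18 (a1 b1 a2 b2 l1 l2 : ℕ)
    (α1 : Fin l1 → EuclideanSpace ℂ (Fin a1)) (β1 : Fin l1 → EuclideanSpace ℂ (Fin b1))
    (α2 : Fin l2 → EuclideanSpace ℂ (Fin a2)) (β2 : Fin l2 → EuclideanSpace ℂ (Fin b2))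
    (h1ne : ∀ i, α1 i ≠ 0 ∧ β1 i ≠ 0) (h2ne : ∀ j, α2 j ≠ 0 ∧ β2 j ≠ 0)
    (h1orth : ∀ i j : Fin l1, i ≠ j →
      (inner ℂ (α1 i) (α1 j) : ℂ) = 0 ∨ (inner ℂ (β1 i) (β1 j) : ℂ) = 0)
    (h2orth : ∀ i j : Fin l2, i ≠ j →
      (inner ℂ (α2 i) (α2 j) : ℂ) = 0 ∨ (inner ℂ (β2 i) (β2 j) : ℂ) = 0)
    (h1upb : ¬ ∃ (a : EuclideanSpace ℂ (Fin a1)) (b : EuclideanSpace ℂ (Fin b1)),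
      a ≠ 0 ∧ b ≠ 0 ∧ ∀ i, (inner ℂ a (α1 i) : ℂ) = 0 ∨ (inner ℂ b (β1 i) : ℂ) = 0)
    (h2upb : ¬ ∃ (a : EuclideanSpace ℂ (Fin a2)) (b : EuclideanSpace ℂ (Fin b2)),
      a ≠ 0 ∧ b ≠ 0 ∧ ∀ j, (inner ℂ a (α2 j) : ℂ) = 0 ∨ (inner ℂ b (β2 j) : ℂ) = 0) :
    (∀ i i' : Fin l1, ∀ j j' : Fin l2, (i, j) ≠ (i', j') →
      (inner ℂ (prodVec (α1 i) (α2 j)) (prodVec (α1 i') (α2 j')) : ℂ) = 0 ∨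
      (inner ℂ (prodVec (β1 i) (β2 j)) (prodVec (β1 i') (β2 j')) : ℂ) = 0) ∧
    ¬ ∃ (a : EuclideanSpace ℂ (Fin a1 × Fin a2)) (b : EuclideanSpace ℂ (Fin b1 × Fin b2)),
      a ≠ 0 ∧ b ≠ 0 ∧ ∀ (i : Fin l1) (j : Fin l2),
        (inner ℂ a (prodVec (α1 i) (α2 j)) : ℂ) = 0 ∨
        (inner ℂ b (prodVec (β1 i) (β2 j)) : ℂ) = 0 := by
  constructor
  · intro i i' j j' hne
    rw [inner_prodVec, inner_prodVec]
    by_cases hii : i = i'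
    · subst hii
      have hjj : j ≠ j' := fun h => hne (by rw [h])
      rcases h2orth j j' hjj with h | h
      · exact Or.inl (by rw [h, mul_zero])
      · exact Or.inr (by rw [h, mul_zero])
    · rcases h1orth i i' hii with h | h
      · exact Or.inl (by rw [h, zero_mul])
      · exact Or.inr (by rw [h, zero_mul])
  · rintro ⟨a, b, ha, hb, hmain⟩
    -- Row-wise: for each i, one of the contractions vanishes.
    have hrow : ∀ i : Fin l1, contr a (α1 i) = 0 ∨ contr b (β1 i) = 0 := by
      intro i
      by_cases hA : contr a (α1 i) = 0
      · exact Or.inl hA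
      by_cases hB : contr b (β1 i) = 0
      · exact Or.inr hB
      exact absurd ⟨contr a (α1 i), contr b (β1 i), hA, hB, fun j => by
        rw [← inner_contr, ← inner_contr]; exact hmain i j⟩ h2upb
    obtain ⟨⟨x0, y0⟩, hpa⟩ := exists_ne_zero_coord a ha
    obtain ⟨⟨x1, y1⟩, hpb⟩ := exists_ne_zero_coord b hb
    have hsa : aSlice a y0 ≠ 0 := fun h => hpa (by simpa [aSlice] using congrArg (fun v => v x0) h)
    have hsb : aSlice b y1 ≠ 0 := fun h => hpb (by simpa [aSlice] using congrArg (fun v => v x1) h)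
    refine h1upb ⟨aSlice a y0, aSlice b y1, hsa, hsb, fun i => ?_⟩
    rcases hrow i with h | h
    · left
      rw [inner_slice, h]
      simp
    · right
      rw [inner_slice, h]
      simp
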